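/- Let σ₂ = ⟨(0,1,0),(3,1,0),(6,8,9)⟩ ⊆ ℝ³ (a maximal cone of the dual Newton polyhedron of the hypersurface y³ + xz² − x⁴ = 0). Then the Hilbert basis of σ₂ is exactly { (0,1,0), (3,1,0), (6,8,9), (1,1,0), (2,1,0), (1,1,1), (2,3,3) }; that is, these seven vectors are precisely the irreducible elements of S_{σ₂} = σ₂ ∩ ℤ³, and they generate the monoid S_{σ₂}. -/

import Mathlib

open scoped BigOperators

/-- The real-coordinate vector attached to an integer vector. -/
def toR {n : ℕ} (u : Fin n → ℤ) : Fin n → ℝ := fun j => (u j : ℝ)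

/-- The rational polyhedral cone generated by integer vectors `v 0, …, v (r-1)`:
all nonnegative real linear combinations of the generators. -/
def coneOf {n r : ℕ} (v : Fin r → (Fin n → ℤ)) : Set (Fin n → ℝ) :=
  { x | ∃ c : Fin r → ℝ, (∀ i, 0 ≤ c i) ∧ x = ∑ i, c i • toR (v i) }

/-- The lattice points of a subset of `ℝⁿ`: `S_σ = σ ∩ ℤⁿ`. -/
def latticePoints {n : ℕ} (σ : Set (Fin n → ℝ)) : Set (Fin n → ℤ) :=
  { u | toR u ∈ σ }

/-- `u` is an irreducible element of `S`: it is a nonzero element of `S` which cannot be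
written as the sum of two nonzero elements of `S`. -/
def IsIrreducibleElt {n : ℕ} (S : Set (Fin n → ℤ)) (u : Fin n → ℤ) : Prop :=
  u ∈ S ∧ u ≠ 0 ∧ ∀ a b : Fin n → ℤ, a ∈ S → b ∈ S → u = a + b → a = 0 ∨ b = 0

/-- The Hilbert basis of (the monoid of lattice points of) a cone:
the set of its irreducible elements. -/
def hilbertBasis {n : ℕ} (S : Set (Fin n → ℤ)) : Set (Fin n → ℤ) :=
  { u | IsIrreducibleElt S u }

namespace Sigma2Aux

lemma mem_S_iff (u : Fin 3 → ℤ) :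
    u ∈ latticePoints (coneOf ![![0, 1, 0], ![3, 1, 0], ![6, 8, 9]]) ↔
      0 ≤ u 2 ∧ 2 * u 2 ≤ 3 * u 0 ∧ u 0 + 2 * u 2 ≤ 3 * u 1 := by
  constructor
  · rintro ⟨c, hc, hx⟩
    have h0 := congrFun hx 0
    have h1 := congrFun hx 1
    have h2 := congrFun hx 2
    simp [toR, Fin.sum_univ_three, Matrix.cons_val_zero, Matrix.cons_val_one] at h0 h1 h2
    have hc0 := hc 0
    have hc1 := hc 1
    have hc2 := hc 2
    have e0 : (u 0 : ℝ) = 3 * c 1 + 6 * c 2 := by rw [h0]; ring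
    have e1 : (u 1 : ℝ) = c 0 + c 1 + 8 * c 2 := by rw [h1]; ring
    have e2 : (u 2 : ℝ) = 9 * c 2 := by rw [h2]; ring
    refine ⟨?_, ?_, ?_⟩
    · have : (0:ℝ) ≤ (u 2 : ℝ) := by rw [e2]; positivity
      exact_mod_cast this
    · have : ((2 * u 2 : ℤ) : ℝ) ≤ ((3 * u 0 : ℤ) : ℝ) := by
        push_cast; rw [e0, e2]; nlinarith
      exact_mod_cast this
    · have : ((u 0 + 2 * u 2 : ℤ) : ℝ) ≤ ((3 * u 1 : ℤ) : ℝ) := by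
        push_cast; rw [e0, e1, e2]; nlinarith
      exact_mod_cast this
  · rintro ⟨h1, h2, h3⟩
    refine ⟨![(3 * (u 1 : ℝ) - u 0 - 2 * u 2) / 3, (3 * (u 0 : ℝ) - 2 * u 2) / 9,
      (u 2 : ℝ) / 9], ?_, ?_⟩
    · intro i
      fin_cases i <;> simp
      · have : (u 0 : ℝ) + 2 * u 2 ≤ 3 * u 1 := by exact_mod_cast h3
        linarith
      · have : 2 * (u 2 : ℝ) ≤ 3 * u 0 := by exact_mod_cast h2
        linarith
      · have : (0:ℝ) ≤ u 2 := by exact_mod_cast h1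
        linarith
    · funext j
      fin_cases j <;>
        simp [toR, Fin.sum_univ_three] <;> ring

abbrev Bset : Set (Fin 3 → ℤ) :=
  {![0, 1, 0], ![3, 1, 0], ![6, 8, 9], ![1, 1, 0], ![2, 1, 0], ![1, 1, 1], ![2, 3, 3]}

lemma vec_eq_zero_iff (u : Fin 3 → ℤ) : u = 0 ↔ u 0 = 0 ∧ u 1 = 0 ∧ u 2 = 0 := by
  constructor
  · rintro rfl; simp
  · rintro ⟨h0, h1, h2⟩
    funext j; fin_cases j <;> assumption

/-- The key step: from a nonzero lattice point of the cone one can subtract a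
basis element and stay in the cone. -/
lemma exists_step (u : Fin 3 → ℤ)
    (h1 : 0 ≤ u 2) (h2 : 2 * u 2 ≤ 3 * u 0) (h3 : u 0 + 2 * u 2 ≤ 3 * u 1)
    (hne : ¬(u 0 = 0 ∧ u 1 = 0 ∧ u 2 = 0)) :
    ∃ g ∈ Bset, 1 ≤ g 1 + g 2 ∧
      (0 ≤ u 2 - g 2 ∧ 2 * (u 2 - g 2) ≤ 3 * (u 0 - g 0) ∧
        (u 0 - g 0) + 2 * (u 2 - g 2) ≤ 3 * (u 1 - g 1)) := by
  rcases le_or_gt (u 2) 0 with hz0 | hz1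
  · have hz0' : u 2 = 0 := le_antisymm hz0 h1
    rcases lt_trichotomy (u 0) 1 with hx | hx
    · exact ⟨![0, 1, 0], by simp, by simp, by
        simp only [Matrix.cons_val_zero, Matrix.cons_val_one, Matrix.head_cons,
          Matrix.cons_val_two, Matrix.tail_cons]; omega⟩
    rcases lt_trichotomy (u 0) 2 with hx2 | hx2
    · exact ⟨![1, 1, 0], by simp, by simp, by
        simp only [Matrix.cons_val_zero, Matrix.cons_val_one, Matrix.head_cons,
          Matrix.cons_val_two, Matrix.tail_cons]; omega⟩
    rcases lt_trichotomy (u 0) 3 with hx3 | hx3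
    · exact ⟨![2, 1, 0], by simp, by simp, by
        simp only [Matrix.cons_val_zero, Matrix.cons_val_one, Matrix.head_cons,
          Matrix.cons_val_two, Matrix.tail_cons]; omega⟩
    · exact ⟨![3, 1, 0], by simp, by simp, by
        simp only [Matrix.cons_val_zero, Matrix.cons_val_one, Matrix.head_cons,
          Matrix.cons_val_two, Matrix.tail_cons]; omega⟩
  · rcases lt_or_ge (2 * u 2) (3 * u 0) with hxe | hxe
    · exact ⟨![1, 1, 1], by simp, by simp, by
        simp only [Matrix.cons_val_zero, Matrix.cons_val_one, Matrix.head_cons,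
          Matrix.cons_val_two, Matrix.tail_cons]; omega⟩
    · have hxz : 2 * u 2 = 3 * u 0 := le_antisymm h2 hxe
      rcases lt_or_ge (u 0 + 2 * u 2) (3 * u 1) with hye | hye
      · exact ⟨![2, 3, 3], by simp, by simp, by
          simp only [Matrix.cons_val_zero, Matrix.cons_val_one, Matrix.head_cons,
            Matrix.cons_val_two, Matrix.tail_cons]; omega⟩
      · have hyz : u 0 + 2 * u 2 = 3 * u 1 := le_antisymm h3 hye
        exact ⟨![6, 8, 9], by simp, by simp, by
          simp only [Matrix.cons_val_zero, Matrix.cons_val_one, Matrix.head_cons,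
            Matrix.cons_val_two, Matrix.tail_cons]; omega⟩

lemma gen_aux : ∀ N : ℕ, ∀ u : Fin 3 → ℤ,
    (u 1 + u 2).toNat ≤ N →
    (0 ≤ u 2 ∧ 2 * u 2 ≤ 3 * u 0 ∧ u 0 + 2 * u 2 ≤ 3 * u 1) →
    u ∈ AddSubmonoid.closure Bset := by
  intro N
  induction N with
  | zero =>
    intro u hm ⟨h1, h2, h3⟩
    have hu : u = 0 := by rw [vec_eq_zero_iff]; omega
    rw [hu]; exact zero_mem _
  | succ N ih =>
    intro u hm ⟨h1, h2, h3⟩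
    by_cases hz : u 0 = 0 ∧ u 1 = 0 ∧ u 2 = 0
    · rw [show u = 0 from (vec_eq_zero_iff u).2 hz]; exact zero_mem _
    obtain ⟨g, hgB, hgm, hP1, hP2, hP3⟩ := exists_step u h1 h2 h3 hz
    have hrest : (u - g) ∈ AddSubmonoid.closure Bset := by
      apply ih
      · have e1 : (u - g) 1 = u 1 - g 1 := rfl
        have e2 : (u - g) 2 = u 2 - g 2 := rfl
        rw [e1, e2]; omega
      · exact ⟨hP1, hP2, hP3⟩
    have : u = g + (u - g) := by ring
    rw [this]
    exact add_mem (AddSubmonoid.subset_closure hgB) hrest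

lemma B_sub_S : ∀ g ∈ Bset,
    g ∈ latticePoints (coneOf ![![0, 1, 0], ![3, 1, 0], ![6, 8, 9]]) := by
  intro g hg
  rw [mem_S_iff]
  simp only [Set.mem_insert_iff, Set.mem_singleton_iff] at hg
  rcases hg with rfl | rfl | rfl | rfl | rfl | rfl | rfl <;>
    simp only [Matrix.cons_val_zero, Matrix.cons_val_one, Matrix.head_cons,
      Matrix.cons_val_two, Matrix.tail_cons] <;> omega

end Sigma2Aux

/-- the Hilbert basis of the cone `σ₂ = ⟨(0,1,0),(3,1,0),(6,8,9)⟩` of the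
dual Newton polyhedron of `y³ + xz² − x⁴ = 0` is exactly
`{(0,1,0),(3,1,0),(6,8,9),(1,1,0),(2,1,0),(1,1,1),(2,3,3)}`, and these seven vectors
generate the monoid `S_{σ₂} = σ₂ ∩ ℤ³`. -/
theorem elliptic_sigma2_hilbert_basis :
    let S := latticePoints (coneOf ![![0, 1, 0], ![3, 1, 0], ![6, 8, 9]])
    let B : Set (Fin 3 → ℤ) :=
      {![0, 1, 0], ![3, 1, 0], ![6, 8, 9], ![1, 1, 0], ![2, 1, 0], ![1, 1, 1], ![2, 3, 3]}
    hilbertBasis S = B ∧ (AddSubmonoid.closure B : Set (Fin 3 → ℤ)) = S := by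
  intro S B
  open Sigma2Aux in
  have hBS : ∀ g ∈ B, g ∈ S := Sigma2Aux.B_sub_S
  have hclosure : (AddSubmonoid.closure B : Set (Fin 3 → ℤ)) = S := by
    apply subset_antisymm
    · intro u hu
      induction hu using AddSubmonoid.closure_induction with
      | mem g hg => exact hBS g hg
      | zero =>
        rw [Sigma2Aux.mem_S_iff]
        simp
      | add a b _ _ ha hb =>
        rw [Sigma2Aux.mem_S_iff] at ha hb ⊢
        have e0 : (a + b) 0 = a 0 + b 0 := rfl
        have e1 : (a + b) 1 = a 1 + b 1 := rfl
        have e2 : (a + b) 2 = a 2 + b 2 := rfl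
        rw [e0, e1, e2]; omega
    · intro u hu
      rw [Sigma2Aux.mem_S_iff] at hu
      exact Sigma2Aux.gen_aux (u 1 + u 2).toNat u le_rfl hu
  refine ⟨?_, hclosure⟩
  apply subset_antisymm
  · -- hilbertBasis S ⊆ B
    rintro u ⟨huS, hune, hirr⟩
    have hu' := (Sigma2Aux.mem_S_iff u).1 huS
    have hz : ¬(u 0 = 0 ∧ u 1 = 0 ∧ u 2 = 0) := by
      intro h; exact hune ((Sigma2Aux.vec_eq_zero_iff u).2 h)
    obtain ⟨g, hgB, hgm, hP1, hP2, hP3⟩ :=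
      Sigma2Aux.exists_step u hu'.1 hu'.2.1 hu'.2.2 hz
    have hrS : (u - g) ∈ S := by
      rw [Sigma2Aux.mem_S_iff]
      exact ⟨hP1, hP2, hP3⟩
    have heq : u = g + (u - g) := by ring
    rcases hirr g (u - g) (hBS g hgB) hrS heq with hg0 | hr0
    · exfalso
      have : g 1 + g 2 = 0 := by rw [hg0]; rfl
      omega
    · have hug : u = g := sub_eq_zero.mp hr0
      rw [hug]; exact hgB
  · -- B ⊆ hilbertBasis S
    intro g hgB
    refine ⟨hBS g hgB, ?_, ?_⟩
    · replace hgB : g ∈ Sigma2Aux.Bset := hgB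
      simp only [Set.mem_insert_iff, Set.mem_singleton_iff] at hgB
      rcases hgB with rfl | rfl | rfl | rfl | rfl | rfl | rfl <;>
      · rw [Ne, Sigma2Aux.vec_eq_zero_iff]
        simp only [Matrix.cons_val_zero, Matrix.cons_val_one, Matrix.head_cons,
          Matrix.cons_val_two, Matrix.tail_cons]
        omega
    · intro a b ha hb heq
      rw [Sigma2Aux.mem_S_iff] at ha hb
      have e0 := congrFun heq 0
      have e1 := congrFun heq 1
      have e2 := congrFun heq 2
      simp only [Pi.add_apply] at e0 e1 e2
      rw [Sigma2Aux.vec_eq_zero_iff, Sigma2Aux.vec_eq_zero_iff]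
      replace hgB : g ∈ Sigma2Aux.Bset := hgB
      simp only [Set.mem_insert_iff, Set.mem_singleton_iff] at hgB
      rcases hgB with rfl | rfl | rfl | rfl | rfl | rfl | rfl <;>
        simp only [Matrix.cons_val_zero, Matrix.cons_val_one, Matrix.head_cons,
          Matrix.cons_val_two, Matrix.tail_cons] at e0 e1 e2 <;>
        omega
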